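/- Let n ≥ 1, v = 4n+2, m = 2n+1, and for i ∈ {0,...,2n} set a_i = i and b_i = i + m in Fin v. Then the sum, over all 3-element subsets {α0,α1,α2} of {0,...,2n}, of the minimal trades (a_{α0} a_{α1} a_{α2} ; b_{α0} b_{α1} b_{α2}) is a simple T(2,3,v) trade of volume 4·C(2n+1,3), and its support is exactly the set of 3-element subsets of Fin v whose three elements have pairwise distinct residues modulo m. -/
import Mathlib

/-- A `T(2,3,v)` trade: `f B = 0` unless `|B| = 3`, and every pair is balanced. -/
def isTrade (v : ℕ) (f : Finset (Fin v) → ℤ) : Prop :=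
  (∀ B : Finset (Fin v), B.card ≠ 3 → f B = 0) ∧
  ∀ P : Finset (Fin v), P.card = 2 →
    ∑ B ∈ Finset.univ.filter (fun B : Finset (Fin v) => B.card = 3 ∧ P ⊆ B), f B = 0

/-- A trade is simple if every value lies in `{-1, 0, 1}`. -/
def isSimple (v : ℕ) (f : Finset (Fin v) → ℤ) : Prop :=
  ∀ B : Finset (Fin v), f B = -1 ∨ f B = 0 ∨ f B = 1

/-- The volume of a trade: the sum of its positive entries. -/
def volume (v : ℕ) (f : Finset (Fin v) → ℤ) : ℤ :=
  ∑ B : Finset (Fin v), max (f B) 0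

/-- A `(2,3,v)`-halving: a simple trade taking value `±1` on every 3-subset. -/
def isHalving (v : ℕ) (f : Finset (Fin v) → ℤ) : Prop :=
  isTrade v f ∧ isSimple v f ∧
    ∀ B : Finset (Fin v), B.card = 3 → f B = 1 ∨ f B = -1

/-- The minimal trade `(a₀ a₁ a₂ ; b₀ b₁ b₂)`: it sends each of the eight sets
`{c₀,c₁,c₂}` with `cᵢ ∈ {aᵢ, bᵢ}` to `(-1)^(#{i : cᵢ = bᵢ})` and all other sets to 0. -/
def minimalTrade (v : ℕ) (a b : Fin 3 → Fin v) : Finset (Fin v) → ℤ :=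
  fun B => ∑ s : Fin 3 → Bool,
    (-1 : ℤ) ^ (Finset.univ.filter (fun i => s i = true)).card *
      (if B = Finset.image (fun i => if s i then b i else a i) Finset.univ then 1 else 0)

/-- The directed-edge trade `E(i,j) = 1_{{aᵢ,bᵢ,aⱼ}} + 1_{{aᵢ,bᵢ,bⱼ}} - 1_{{aⱼ,bⱼ,aᵢ}} - 1_{{aⱼ,bⱼ,bᵢ}}`. -/
def edgeTrade (v : ℕ) {ι : Type*} (a b : ι → Fin v) (i j : ι) : Finset (Fin v) → ℤ :=
  fun B => (if B = {a i, b i, a j} then 1 else 0) + (if B = {a i, b i, b j} then 1 else 0)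
    - (if B = {a j, b j, a i} then 1 else 0) - (if B = {a j, b j, b i} then 1 else 0)

/-! ### Auxiliary machinery -/

def sgn (c : Fin 3 → Bool) : ℤ := (-1 : ℤ) ^ (Finset.univ.filter (fun i => c i = true)).card
lemma sgn_pm : ∀ c : Fin 3 → Bool, sgn c = 1 ∨ sgn c = -1 := by decide
lemma sgn_flip : ∀ (c : Fin 3 → Bool) (j : Fin 3), sgn (Function.update c j (!c j)) = -sgn c := by
  decide
lemma sgn_count : ∑ c : Fin 3 → Bool, (if sgn c = 1 then (1:ℤ) else 0) = 4 := by decide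
lemma sgn_ne_zero (c : Fin 3 → Bool) : sgn c ≠ 0 := by rcases sgn_pm c with h | h <;> omega

section Core
set_option linter.unusedSectionVars false
variable {v m : ℕ}
variable (α : Fin 3 → Fin m) (hα : Function.Injective α)
variable (A B : Fin 3 → Fin v) (hA : ∀ k, (A k : ℕ) = α k)
  (hB : ∀ k, (B k : ℕ) = (α k : ℕ) + m)

def Cc (A B : Fin 3 → Fin v) (c : Fin 3 → Bool) (i : Fin 3) : Fin v := if c i then B i else A i
def img (A B : Fin 3 → Fin v) (c : Fin 3 → Bool) : Finset (Fin v) :=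
  Finset.image (fun i => if c i then B i else A i) Finset.univ

lemma img_eq (c : Fin 3 → Bool) : img A B c = Finset.image (Cc A B c) Finset.univ := rfl

include hA hB in
lemma Cc_res (c : Fin 3 → Bool) (i : Fin 3) : ((Cc A B c i : Fin v) : ℕ) % m = (α i : ℕ) := by
  have h1 := (α i).isLt
  unfold Cc
  by_cases h : c i
  · simp only [h, if_pos, if_true]
    rw [hB i, Nat.add_mod_right]
    exact Nat.mod_eq_of_lt h1
  · simp only [h, if_false, Bool.false_eq_true]
    rw [hA i]
    exact Nat.mod_eq_of_lt h1

include hα hA hB in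
lemma Cc_inj (c : Fin 3 → Bool) : Function.Injective (Cc A B c) := by
  intro i j hij
  have := congrArg (fun x : Fin v => (x : ℕ) % m) hij
  simp only [Cc_res α A B hA hB] at this
  exact hα (Fin.ext this)

include hα hA hB in
lemma img_card (c : Fin 3 → Bool) : (img A B c).card = 3 := by
  rw [img_eq, Finset.card_image_of_injective _ (Cc_inj α hα A B hA hB c)]
  simp

lemma mem_img {c : Fin 3 → Bool} {x : Fin v} : x ∈ img A B c ↔ ∃ i, Cc A B c i = x := by
  simp [img_eq, Finset.mem_image]

include hα hA hB in
lemma img_injOn (c : Fin 3 → Bool) :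
    Set.InjOn (fun x : Fin v => (x : ℕ) % m) ↑(img A B c) := by
  intro x hx y hy hxy
  rw [Finset.mem_coe, mem_img] at hx hy
  obtain ⟨i, rfl⟩ := hx; obtain ⟨j, rfl⟩ := hy
  simp only [Cc_res α A B hA hB] at hxy
  exact congrArg _ (hα (Fin.ext hxy))

include hα hA hB in
lemma img_c_inj {c c' : Fin 3 → Bool} (h : img A B c = img A B c') : c = c' := by
  funext i
  have hx : Cc A B c i ∈ img A B c' := by
    rw [← h, mem_img]; exact ⟨i, rfl⟩
  rw [mem_img] at hx
  obtain ⟨j, hj⟩ := hx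
  have hres := congrArg (fun x : Fin v => (x : ℕ) % m) hj
  simp only [Cc_res α A B hA hB] at hres
  have hij : j = i := hα (Fin.ext hres)
  subst hij
  have hval := congrArg (fun x : Fin v => (x : ℕ)) hj
  have hm : 0 < m := (α j).pos
  unfold Cc at hval
  by_cases h1 : c j <;> by_cases h2 : c' j <;>
    simp [h1, h2, hA j, hB j] at hval ⊢ <;> omega

include hα hA hB in
lemma mem_img_flip {c : Fin 3 → Bool} {j : Fin 3} {p : Fin v}
    (hp : (p : ℕ) % m ≠ (α j : ℕ)) :
    p ∈ img A B c ↔ p ∈ img A B (Function.update c j (!c j)) := by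
  have key : ∀ (d : Fin 3 → Bool), p ∈ img A B d → ∀ d' : Fin 3 → Bool,
      (∀ i, i ≠ j → d' i = d i) → p ∈ img A B d' := by
    intro d hd d' hd'
    rw [mem_img] at hd ⊢
    obtain ⟨i, rfl⟩ := hd
    have hij : i ≠ j := by
      intro h; subst h; exact hp (Cc_res α A B hA hB d i)
    refine ⟨i, ?_⟩
    unfold Cc; rw [hd' i hij]
  constructor
  · intro h; exact key c h _ (fun i hi => Function.update_of_ne hi _ _)
  · intro h; exact key _ h c (fun i hi => (Function.update_of_ne hi _ _).symm)

include hα hA hB in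
lemma balance (p q : Fin v) :
    ∑ c : Fin 3 → Bool, sgn c * (if p ∈ img A B c ∧ q ∈ img A B c then (1:ℤ) else 0) = 0 := by
  have hj : ∃ j : Fin 3, (α j : ℕ) ≠ (p : ℕ) % m ∧ (α j : ℕ) ≠ (q : ℕ) % m := by
    by_contra hcon
    push_neg at hcon
    have h0 := hcon 0; have h1 := hcon 1; have h2 := hcon 2
    have d01 : (α 0 : ℕ) ≠ (α 1 : ℕ) := fun h => by have := hα (Fin.ext h); simp at this
    have d02 : (α 0 : ℕ) ≠ (α 2 : ℕ) := fun h => by have := hα (Fin.ext h); simp at this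
    have d12 : (α 1 : ℕ) ≠ (α 2 : ℕ) := fun h => by have := hα (Fin.ext h); simp at this
    rcases Classical.em ((α 0 : ℕ) = (p:ℕ) % m) with h | h <;> omega
  obtain ⟨j, hjp, hjq⟩ := hj
  refine Finset.sum_involution (fun c _ => Function.update c j (!c j)) ?_ ?_ ?_ ?_
  · intro c _
    have h1 : (p ∈ img A B c ∧ q ∈ img A B c) ↔
        (p ∈ img A B (Function.update c j (!c j)) ∧
          q ∈ img A B (Function.update c j (!c j))) := by
      rw [mem_img_flip α hα A B hA hB (Ne.symm hjp), mem_img_flip α hα A B hA hB (Ne.symm hjq)]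
    rw [sgn_flip]
    by_cases h : p ∈ img A B c ∧ q ∈ img A B c
    · rw [if_pos h, if_pos (h1.mp h)]; ring
    · rw [if_neg h, if_neg (fun hh => h (h1.mpr hh))]; ring
  · intro c _ _ hcc
    have := congrFun hcc j
    simp at this
  · intro c _; exact Finset.mem_univ _
  · intro c _
    simp only [Function.update_self, Bool.not_not, Function.update_idem,
      Function.update_eq_self]
end Core

section Main
set_option linter.unusedSectionVars false
variable {v m : ℕ}

noncomputable def alphaF
    (s : {x : Finset (Fin m) // x ∈ (Finset.univ : Finset (Fin m)).powersetCard 3}) :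
    Fin 3 → Fin m :=
  fun k => (s.1.orderIsoOfFin (Finset.mem_powersetCard.mp s.2).2 k : Fin m)

lemma alphaF_inj (s) : Function.Injective (alphaF (m := m) s) := by
  intro i j h
  exact (s.1.orderIsoOfFin (Finset.mem_powersetCard.mp s.2).2).injective (Subtype.ext h)

lemma alphaF_mem (s) (k : Fin 3) : alphaF (m := m) s k ∈ s.1 :=
  (s.1.orderIsoOfFin (Finset.mem_powersetCard.mp s.2).2 k).2

lemma image_alphaF (s) : Finset.image (alphaF (m := m) s) Finset.univ = s.1 := by
  apply Finset.eq_of_subset_of_card_le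
  · intro x hx
    obtain ⟨k, _, rfl⟩ := Finset.mem_image.mp hx
    exact alphaF_mem s k
  · rw [Finset.card_image_of_injective _ (alphaF_inj s),
      (Finset.mem_powersetCard.mp s.2).2]
    simp

noncomputable def ImgMT (a b : Fin m → Fin v)
    (s : {x : Finset (Fin m) // x ∈ (Finset.univ : Finset (Fin m)).powersetCard 3})
    (c : Fin 3 → Bool) : Finset (Fin v) :=
  Finset.image (fun i => if c i then b (alphaF s i) else a (alphaF s i)) Finset.univ

noncomputable def GF (a b : Fin m → Fin v) (B : Finset (Fin v)) : ℤ :=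
  ∑ s ∈ ((Finset.univ : Finset (Fin m)).powersetCard 3).attach,
    ∑ c : Fin 3 → Bool, sgn c * (if B = ImgMT a b s c then 1 else 0)

variable (a b : Fin m → Fin v)
  (ha : ∀ i : Fin m, (a i : ℕ) = (i : ℕ)) (hb : ∀ i : Fin m, (b i : ℕ) = (i : ℕ) + m)
  (hvm : v = 2 * m)

lemma ImgMT_eq_img (s) (c : Fin 3 → Bool) :
    ImgMT a b s c = img (fun k => a (alphaF s k)) (fun k => b (alphaF s k)) c := rfl

include ha in
lemma haf (s) : ∀ k, ((a (alphaF s k)) : ℕ) = (alphaF s k : ℕ) := fun k => ha _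

include hb in
lemma hbf (s) : ∀ k, ((b (alphaF s k)) : ℕ) = (alphaF s k : ℕ) + m := fun k => hb _

include ha hb in
lemma ImgMT_card (s) (c : Fin 3 → Bool) : (ImgMT a b s c).card = 3 := by
  rw [ImgMT_eq_img]
  exact img_card _ (alphaF_inj s) _ _ (haf a ha s) (hbf b hb s) c

include ha hb in
lemma ImgMT_injOn (s) (c : Fin 3 → Bool) :
    Set.InjOn (fun x : Fin v => (x : ℕ) % m) ↑(ImgMT a b s c) := by
  rw [ImgMT_eq_img]
  exact img_injOn _ (alphaF_inj s) _ _ (haf a ha s) (hbf b hb s) c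

/-- residue map -/
def resm (hm : 0 < m) (x : Fin v) : Fin m := ⟨(x : ℕ) % m, Nat.mod_lt _ hm⟩

include ha hb in
lemma ImgMT_res (hm : 0 < m) (s) (c : Fin 3 → Bool) :
    Finset.image (resm hm) (ImgMT a b s c) = s.1 := by
  rw [ImgMT_eq_img, img_eq, Finset.image_image]
  have : resm (v := v) hm ∘ Cc (fun k => a (alphaF s k)) (fun k => b (alphaF s k)) c
      = alphaF s := by
    funext i
    exact Fin.ext (Cc_res _ _ _ (haf a ha s) (hbf b hb s) c i)
  rw [this, image_alphaF]

include ha hb in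
lemma ImgMT_inj (hm : 0 < m) {s s'} {c c' : Fin 3 → Bool}
    (h : ImgMT a b s c = ImgMT a b s' c') : s = s' ∧ c = c' := by
  have hs : s = s' := by
    have := ImgMT_res a b ha hb hm s c
    rw [h, ImgMT_res a b ha hb hm s' c'] at this
    exact Subtype.ext this.symm
  subst hs
  refine ⟨rfl, ?_⟩
  rw [ImgMT_eq_img, ImgMT_eq_img] at h
  exact img_c_inj _ (alphaF_inj s) _ _ (haf a ha s) (hbf b hb s) h

include ha hb in
lemma GF_img (hm : 0 < m) (s₀) (c₀ : Fin 3 → Bool) :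
    GF a b (ImgMT a b s₀ c₀) = sgn c₀ := by
  unfold GF
  rw [Finset.sum_eq_single s₀]
  · rw [Finset.sum_eq_single c₀]
    · simp
    · intro c _ hc
      rw [if_neg, mul_zero]
      intro h
      exact hc ((ImgMT_inj a b ha hb hm h).2.symm)
    · intro h; exact absurd (Finset.mem_univ c₀) h
  · intro s _ hs
    apply Finset.sum_eq_zero
    intro c _
    rw [if_neg, mul_zero]
    intro h
    exact hs ((ImgMT_inj a b ha hb hm h).1.symm)
  · intro h; exact absurd (Finset.mem_attach _ s₀) h

lemma GF_zero {B : Finset (Fin v)} (h : ∀ s c, B ≠ ImgMT a b s c) : GF a b B = 0 := by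
  unfold GF
  apply Finset.sum_eq_zero
  intro s _
  apply Finset.sum_eq_zero
  intro c _
  rw [if_neg (h s c), mul_zero]

include ha hb hvm in
lemma exists_img (hm : 0 < m) {B : Finset (Fin v)} (hB3 : B.card = 3)
    (hinj : Set.InjOn (fun x : Fin v => (x : ℕ) % m) ↑B) :
    ∃ s c, B = ImgMT a b s c := by
  have hrinj : Set.InjOn (resm (v := v) hm) ↑B := by
    intro x hx y hy h
    exact hinj hx hy (congrArg Fin.val h)
  set s₀ := B.image (resm hm) with hs₀def
  have hcard : s₀.card = 3 := (Finset.card_image_of_injOn hrinj).trans hB3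
  have hs₀ : s₀ ∈ (Finset.univ : Finset (Fin m)).powersetCard 3 :=
    Finset.mem_powersetCard.mpr ⟨Finset.subset_univ _, hcard⟩
  set sS : {x : Finset (Fin m) // x ∈ (Finset.univ : Finset (Fin m)).powersetCard 3} :=
    ⟨s₀, hs₀⟩ with hsS
  set c₀ : Fin 3 → Bool := fun k => decide (a (alphaF sS k) ∉ B) with hc₀
  have hmem : ∀ k : Fin 3,
      Cc (fun k => a (alphaF sS k)) (fun k => b (alphaF sS k)) c₀ k ∈ B := by
    intro k
    have hk : alphaF sS k ∈ s₀ := alphaF_mem sS k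
    obtain ⟨x, hxB, hx⟩ := Finset.mem_image.mp hk
    have hxval : (x : ℕ) % m = (alphaF sS k : ℕ) := congrArg Fin.val hx
    by_cases hA : a (alphaF sS k) ∈ B
    · have hcf : c₀ k = false := by simp [hc₀, hA]
      simp only [Cc, hcf, Bool.false_eq_true, if_false]
      exact hA
    · have hct : c₀ k = true := by simp [hc₀, hA]
      simp only [Cc, hct, if_true]
      have hxlt : (x : ℕ) < 2 * m := by rw [← hvm]; exact x.isLt
      have hαlt : (alphaF sS k : ℕ) < m := (alphaF sS k).isLt
      have hcase : (x : ℕ) = (alphaF sS k : ℕ) ∨ (x : ℕ) = (alphaF sS k : ℕ) + m := by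
        by_cases hxm : (x : ℕ) < m
        · left; rw [← hxval, Nat.mod_eq_of_lt hxm]
        · push_neg at hxm
          right
          have hsub : (x : ℕ) % m = (x : ℕ) - m := by
            rw [Nat.mod_eq_sub_mod hxm, Nat.mod_eq_of_lt (by omega)]
          omega
      rcases hcase with h | h
      · exfalso
        apply hA
        have hxa : x = a (alphaF sS k) := Fin.ext (by rw [ha]; exact h)
        rwa [← hxa]
      · have hxb : x = b (alphaF sS k) := Fin.ext (by rw [hb]; exact h)
        rwa [← hxb]
  refine ⟨sS, c₀, ?_⟩
  have hsub : ImgMT a b sS c₀ ⊆ B := by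
    intro x hx
    rw [ImgMT_eq_img, mem_img] at hx
    obtain ⟨i, rfl⟩ := hx
    exact hmem i
  exact (Finset.eq_of_subset_of_card_le hsub
    (by rw [hB3, ImgMT_card a b ha hb sS c₀])).symm

end Main

theorem sum_of_minimalTrades_is_simple_trade
    (n : ℕ) (hn : 1 ≤ n) (v m : ℕ) (hv : v = 4 * n + 2) (hm : m = 2 * n + 1)
    (a b : Fin m → Fin v)
    (ha : ∀ i : Fin m, (a i : ℕ) = (i : ℕ)) (hb : ∀ i : Fin m, (b i : ℕ) = (i : ℕ) + m)
    (F : Finset (Fin v) → ℤ)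
    (hF : F = fun B => ∑ s ∈ ((Finset.univ : Finset (Fin m)).powersetCard 3).attach,
      minimalTrade v
        (fun k => a ((s.1.orderIsoOfFin (Finset.mem_powersetCard.mp s.2).2) k))
        (fun k => b ((s.1.orderIsoOfFin (Finset.mem_powersetCard.mp s.2).2) k)) B) :
    isTrade v F ∧ isSimple v F ∧ volume v F = 4 * Nat.choose (2 * n + 1) 3 ∧
      {B : Finset (Fin v) | F B ≠ 0} =
        {B : Finset (Fin v) | B.card = 3 ∧
          Set.InjOn (fun x : Fin v => (x : ℕ) % m) ↑B} := by
  have hvm : v = 2 * m := by omega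
  have hm0 : 0 < m := by omega
  have hFG : ∀ B, F B = GF a b B := by
    intro B; rw [hF]; rfl
  -- value on an image
  have hval : ∀ s c, F (ImgMT a b s c) = sgn c := by
    intro s c
    rw [hFG]
    exact GF_img a b ha hb hm0 s c
  -- zero off the images
  have hzero : ∀ B : Finset (Fin v), (∀ s c, B ≠ ImgMT a b s c) → F B = 0 := by
    intro B h
    rw [hFG]
    exact GF_zero a b h
  have hsimple : isSimple v F := by
    intro B
    by_cases h : ∃ s c, B = ImgMT a b s c
    · obtain ⟨s, c, rfl⟩ := h
      rw [hval]
      rcases sgn_pm c with h | h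
      · right; right; exact h
      · left; exact h
    · push_neg at h
      right; left; exact hzero B h
  refine ⟨⟨?_, ?_⟩, hsimple, ?_, ?_⟩
  · -- card ≠ 3 → F B = 0
    intro B hB3
    apply hzero
    rintro s c rfl
    exact hB3 (ImgMT_card a b ha hb s c)
  · -- pair balance
    intro P hP2
    obtain ⟨p, q, hpq, rfl⟩ := Finset.card_eq_two.mp hP2
    calc ∑ B ∈ Finset.univ.filter
          (fun B : Finset (Fin v) => B.card = 3 ∧ ({p, q} : Finset (Fin v)) ⊆ B), F B
        = ∑ B ∈ Finset.univ.filter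
            (fun B : Finset (Fin v) => B.card = 3 ∧ ({p, q} : Finset (Fin v)) ⊆ B),
            ∑ s ∈ ((Finset.univ : Finset (Fin m)).powersetCard 3).attach,
              ∑ c : Fin 3 → Bool, sgn c * (if B = ImgMT a b s c then 1 else 0) :=
          Finset.sum_congr rfl (fun B _ => hFG B)
      _ = ∑ s ∈ ((Finset.univ : Finset (Fin m)).powersetCard 3).attach,
            ∑ B ∈ Finset.univ.filter
              (fun B : Finset (Fin v) => B.card = 3 ∧ ({p, q} : Finset (Fin v)) ⊆ B),
              ∑ c : Fin 3 → Bool, sgn c * (if B = ImgMT a b s c then 1 else 0) :=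
          Finset.sum_comm
      _ = ∑ s ∈ ((Finset.univ : Finset (Fin m)).powersetCard 3).attach,
            ∑ c : Fin 3 → Bool,
              ∑ B ∈ Finset.univ.filter
                (fun B : Finset (Fin v) => B.card = 3 ∧ ({p, q} : Finset (Fin v)) ⊆ B),
                sgn c * (if B = ImgMT a b s c then 1 else 0) :=
          Finset.sum_congr rfl (fun s _ => Finset.sum_comm)
      _ = ∑ s ∈ ((Finset.univ : Finset (Fin m)).powersetCard 3).attach,
            ∑ c : Fin 3 → Bool, sgn c *
              (if p ∈ ImgMT a b s c ∧ q ∈ ImgMT a b s c then (1:ℤ) else 0) := by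
          refine Finset.sum_congr rfl (fun s _ => Finset.sum_congr rfl (fun c _ => ?_))
          rw [← Finset.mul_sum, Finset.sum_ite_eq']
          congr 1
          by_cases h : p ∈ ImgMT a b s c ∧ q ∈ ImgMT a b s c
          · rw [if_pos h, if_pos]
            exact Finset.mem_filter.mpr ⟨Finset.mem_univ _, ImgMT_card a b ha hb s c,
              Finset.insert_subset h.1 (Finset.singleton_subset_iff.mpr h.2)⟩
          · rw [if_neg h, if_neg]
            intro hmem
            obtain ⟨-, -, hsub⟩ := Finset.mem_filter.mp hmem
            exact h ⟨hsub (Finset.mem_insert_self _ _),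
              hsub (Finset.mem_insert_of_mem (Finset.mem_singleton_self _))⟩
      _ = 0 := by
          apply Finset.sum_eq_zero
          intro s _
          exact balance (alphaF s) (alphaF_inj s) _ _ (haf a ha s) (hbf b hb s) p q
  · -- volume
    have hmax : ∀ B : Finset (Fin v), max (F B) 0 =
        ∑ s ∈ ((Finset.univ : Finset (Fin m)).powersetCard 3).attach,
          ∑ c : Fin 3 → Bool, (if sgn c = 1 ∧ B = ImgMT a b s c then (1:ℤ) else 0) := by
      intro B
      by_cases h : ∃ s c, B = ImgMT a b s c
      · obtain ⟨s₀, c₀, rfl⟩ := h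
        rw [hval]
        rw [Finset.sum_eq_single s₀]
        · rw [Finset.sum_eq_single c₀]
          · rcases sgn_pm c₀ with h | h <;> simp [h]
          · intro c _ hc
            rw [if_neg]
            rintro ⟨-, heq⟩
            exact hc ((ImgMT_inj a b ha hb hm0 heq).2.symm)
          · intro h; exact absurd (Finset.mem_univ c₀) h
        · intro s _ hs
          apply Finset.sum_eq_zero
          intro c _
          rw [if_neg]
          rintro ⟨-, heq⟩
          exact hs ((ImgMT_inj a b ha hb hm0 heq).1.symm)
        · intro h; exact absurd (Finset.mem_attach _ s₀) h
      · push_neg at h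
        rw [hzero B h]
        simp only [max_self]
        symm
        apply Finset.sum_eq_zero
        intro s _
        apply Finset.sum_eq_zero
        intro c _
        rw [if_neg]
        rintro ⟨-, heq⟩
        exact h s c heq
    unfold volume
    calc ∑ B : Finset (Fin v), max (F B) 0
        = ∑ B : Finset (Fin v),
            ∑ s ∈ ((Finset.univ : Finset (Fin m)).powersetCard 3).attach,
              ∑ c : Fin 3 → Bool, (if sgn c = 1 ∧ B = ImgMT a b s c then (1:ℤ) else 0) :=
          Finset.sum_congr rfl (fun B _ => hmax B)
      _ = ∑ s ∈ ((Finset.univ : Finset (Fin m)).powersetCard 3).attach,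
            ∑ B : Finset (Fin v),
              ∑ c : Fin 3 → Bool, (if sgn c = 1 ∧ B = ImgMT a b s c then (1:ℤ) else 0) :=
          Finset.sum_comm
      _ = ∑ s ∈ ((Finset.univ : Finset (Fin m)).powersetCard 3).attach,
            ∑ c : Fin 3 → Bool,
              ∑ B : Finset (Fin v), (if sgn c = 1 ∧ B = ImgMT a b s c then (1:ℤ) else 0) :=
          Finset.sum_congr rfl (fun s _ => Finset.sum_comm)
      _ = ∑ s ∈ ((Finset.univ : Finset (Fin m)).powersetCard 3).attach,
            ∑ c : Fin 3 → Bool, (if sgn c = 1 then (1:ℤ) else 0) := by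
          refine Finset.sum_congr rfl (fun s _ => Finset.sum_congr rfl (fun c _ => ?_))
          by_cases hc : sgn c = 1
          · simp only [hc, true_and]
            rw [Finset.sum_ite_eq' Finset.univ (ImgMT a b s c) (fun _ => (1:ℤ))]
            simp
          · simp [hc]
      _ = ∑ s ∈ ((Finset.univ : Finset (Fin m)).powersetCard 3).attach, (4:ℤ) :=
          Finset.sum_congr rfl (fun s _ => sgn_count)
      _ = 4 * Nat.choose (2 * n + 1) 3 := by
          rw [Finset.sum_const, Finset.card_attach, Finset.card_powersetCard]
          simp only [Finset.card_univ, Fintype.card_fin]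
          rw [hm]
          push_cast
          ring
  · -- support
    ext B
    simp only [Set.mem_setOf_eq]
    constructor
    · intro hFB
      by_contra hng
      apply hFB
      apply hzero
      rintro s c rfl
      exact hng ⟨ImgMT_card a b ha hb s c, ImgMT_injOn a b ha hb s c⟩
    · rintro ⟨h3, hinj⟩
      obtain ⟨s, c, rfl⟩ := exists_img a b ha hb hvm hm0 h3 hinj
      rw [hval]
      exact sgn_ne_zero c
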